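/- Let F be a finite field, m a positive natural number, S ∈ F^m fixed, and let (Δ_c, Δ_d, Δ_e, Δ_S) ∈ F × F × F × F^m be a fixed shift that is not the zero tuple. Then the number of triples (c, d, e) ∈ F³ such that h'_{c+Δ_c, d+Δ_d, e+Δ_e}(S + Δ_S) = h'_{c,d,e}(S) is at most (m + 1)·|F|². -/

import Mathlib

open Polynomial Finset

theorem dske_secret_tag_shift_count {F : Type*} [Field F] [Fintype F]
    (m : ℕ) (hm : 0 < m) (S : Fin m → F)
    (Δ : F × F × F × (Fin m → F)) (hΔ : Δ ≠ 0) :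
    Nat.card {cde : F × F × F //
      (cde.2.1 + Δ.2.1) + (cde.1 + Δ.1) * (cde.2.2 + Δ.2.2.1) +
          ∑ j : Fin m, (cde.1 + Δ.1) ^ (j.1 + 2) * (S j + Δ.2.2.2 j) =
        cde.2.1 + cde.1 * cde.2.2 + ∑ j : Fin m, cde.1 ^ (j.1 + 2) * S j} ≤
      (m + 1) * Fintype.card F ^ 2 := by
  classical
  obtain ⟨Δc, Δd, Δe, ΔS⟩ := Δ
  rw [Nat.card_eq_fintype_card, Fintype.card_subtype]
  by_cases hΔc : Δc = 0
  · subst hΔc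
    set p : F[X] := C Δd + C Δe * X + ∑ j : Fin m, C (ΔS j) * X ^ (j.1 + 2) with hp
    have hcoeff0 : p.coeff 0 = Δd := by
      simp [hp, finset_sum_coeff, coeff_X_pow]
    have hcoeff1 : p.coeff 1 = Δe := by
      simp [hp, finset_sum_coeff, coeff_X_pow]
    have hcoeffk : ∀ k : Fin m, p.coeff (k.1 + 2) = ΔS k := by
      intro k
      simp only [hp, coeff_add, finset_sum_coeff, coeff_C_mul, coeff_X_pow, coeff_C,
        coeff_X, mul_ite, mul_one, mul_zero]
      rw [Finset.sum_eq_single k]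
      · simp
      · intro b _ hb
        have hne : ¬ (k.1 + 2 = b.1 + 2) := by
          intro h; exact hb (Fin.ext (by omega))
        simp [hne]
        intro h; exact absurd (Fin.ext h) (Ne.symm hb)
      · simp
    have hp0 : p ≠ 0 := by
      intro h0
      apply hΔ
      have hd : Δd = 0 := by rw [← hcoeff0, h0, coeff_zero]
      have he : Δe = 0 := by rw [← hcoeff1, h0, coeff_zero]
      have hS : ΔS = 0 := by
        funext k
        rw [← hcoeffk k, h0, coeff_zero]; rfl
      simp [Prod.ext_iff, hd, he, hS]
    have hdeg : p.natDegree ≤ m + 1 := by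
      refine le_trans (natDegree_add_le _ _) (max_le (le_trans (natDegree_add_le _ _)
        (max_le (by simp) (le_trans (natDegree_mul_le) (by simp)))) ?_)
      refine natDegree_sum_le_of_forall_le _ _ fun j _ => ?_
      refine le_trans natDegree_mul_le ?_
      simp only [natDegree_C, natDegree_X_pow, zero_add]
      omega
    have hsub : (univ.filter fun cde : F × F × F =>
        (cde.2.1 + Δd) + (cde.1 + 0) * (cde.2.2 + Δe) +
          ∑ j : Fin m, (cde.1 + 0) ^ (j.1 + 2) * (S j + ΔS j) =
        cde.2.1 + cde.1 * cde.2.2 + ∑ j : Fin m, cde.1 ^ (j.1 + 2) * S j) ⊆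
        p.roots.toFinset ×ˢ ((univ : Finset F) ×ˢ (univ : Finset F)) := by
      rintro ⟨c, d, e⟩ hcde
      simp only [mem_filter, add_zero] at hcde
      have h := hcde.2
      simp only [mul_add, Finset.sum_add_distrib] at h
      have hroot : p.eval c = 0 := by
        have hev : p.eval c = Δd + Δe * c + ∑ j : Fin m, ΔS j * c ^ (j.1 + 2) := by
          simp [hp, eval_finset_sum]
        rw [hev]
        have : ∑ j : Fin m, ΔS j * c ^ (j.1 + 2) =
            ∑ j : Fin m, c ^ (j.1 + 2) * ΔS j := by
          exact Finset.sum_congr rfl fun j _ => mul_comm _ _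
        rw [this]
        linear_combination h
      simp only [Finset.mem_product, Multiset.mem_toFinset, mem_roots hp0, mem_univ,
        and_true]
      exact hroot
    calc _ ≤ (p.roots.toFinset ×ˢ ((univ : Finset F) ×ˢ (univ : Finset F))).card :=
          Finset.card_le_card hsub
      _ = p.roots.toFinset.card * (Fintype.card F * Fintype.card F) := by
          simp [Finset.card_product]
      _ ≤ (m + 1) * Fintype.card F ^ 2 := by
          rw [sq]
          exact Nat.mul_le_mul_right _
            (le_trans (Multiset.toFinset_card_le _) (le_trans (p.card_roots') hdeg))
  · have hsub : (univ.filter fun cde : F × F × F =>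
        (cde.2.1 + Δd) + (cde.1 + Δc) * (cde.2.2 + Δe) +
          ∑ j : Fin m, (cde.1 + Δc) ^ (j.1 + 2) * (S j + ΔS j) =
        cde.2.1 + cde.1 * cde.2.2 + ∑ j : Fin m, cde.1 ^ (j.1 + 2) * S j).card
        ≤ (univ : Finset (F × F)).card := by
      apply Finset.card_le_card_of_injOn (fun cde => (cde.1, cde.2.1))
        (fun _ _ => mem_univ _)
      rintro ⟨c, d, e⟩ ha ⟨c', d', e'⟩ hb hf
      simp only [Prod.mk.injEq] at hf
      obtain ⟨rfl, rfl⟩ := hf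
      simp only [mem_coe, mem_filter] at ha hb
      have h := ha.2
      have h' := hb.2
      have : Δc * e = Δc * e' := by linear_combination h - h'
      have he : e = e' := mul_left_cancel₀ hΔc this
      simp [he]
    calc _ ≤ (univ : Finset (F × F)).card := hsub
      _ = Fintype.card F ^ 2 := by simp [sq]
      _ ≤ (m + 1) * Fintype.card F ^ 2 := Nat.le_mul_of_pos_left _ (by omega)
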